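/- Let A be a symmetric n×n real matrix (not necessarily positive definite), H₀ a symmetric positive-definite n×n matrix, and x₀ ∈ ℝⁿ. Run PCG on q with preconditioner H₀ from x₀, and run a Broyden-class quasi-Newton method with exact line search from the same x₀ with initial matrix H₀ and parameters φ_k. Suppose PCG iterations 0,…,j are well defined and, for k = 0,…,j, φ_k ≠ φ_k^c, s_kᵀ A s_k ≠ 0 and y_kᵀ H_k y_k ≠ 0. Then, as long as g_k ≠ 0, there exists a nonzero scalar γ_k (with γ₀ = 1) such that the Broyden search direction satisfies d_k = γ_k d_k^{PCG}, and the scalars obey the recurrence γ_{k+1} = (γ_k g_kᵀH₀g_k + φ_k g_{k+1}ᵀH₀g_{k+1}) / (γ_k g_kᵀH₀g_k + g_{k+1}ᵀH₀g_{k+1}). Consequently the steps s_k generated by any Broyden-class method are independent of φ_k and coincide with the PCG steps. -/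

import Mathlib

open Matrix

lemma helper_vmv {n : ℕ} (u v w : Fin n → ℝ) :
    Matrix.vecMulVec u v *ᵥ w = (v ⬝ᵥ w) • u := by
  ext i
  simp [vecMulVec_apply, mulVec, dotProduct, Finset.mul_sum, mul_comm, mul_assoc, mul_left_comm]

lemma helper_symdot {n : ℕ} {M : Matrix (Fin n) (Fin n) ℝ} (hM : M.IsSymm) (u v : Fin n → ℝ) :
    u ⬝ᵥ (M *ᵥ v) = v ⬝ᵥ (M *ᵥ u) := by
  rw [dotProduct_mulVec, ← mulVec_transpose, dotProduct_comm, hM.eq]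

lemma helper_vmv_transpose {n : ℕ} (u v : Fin n → ℝ) :
    (Matrix.vecMulVec u v)ᵀ = Matrix.vecMulVec v u := by
  ext i j; simp [vecMulVec_apply, transpose_apply, mul_comm]

lemma helper_update_mulVec {n : ℕ} (M : Matrix (Fin n) (Fin n) ℝ) (s hy v w : Fin n → ℝ)
    (c1 c2 c3 : ℝ) :
    (M + c1 • vecMulVec s s - c2 • vecMulVec hy hy + c3 • vecMulVec v v) *ᵥ w
      = M *ᵥ w + (c1 * (s ⬝ᵥ w)) • s - (c2 * (hy ⬝ᵥ w)) • hy + (c3 * (v ⬝ᵥ w)) • v := by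
  simp [add_mulVec, sub_mulVec, smul_mulVec, helper_vmv, smul_smul]

set_option maxHeartbeats 1000000

/-- Broyden-class methods with exact line search generate directions
proportional to the preconditioned CG directions, with an explicit recurrence for the
proportionality coefficient, and their steps coincide with the PCG steps. -/
theorem broyden_pcg_proportionality
    (n : ℕ) (A H0 : Matrix (Fin n) (Fin n) ℝ) (b x0 : Fin n → ℝ)
    (hA : A.IsSymm) (hH0 : H0.PosDef)
    (j : ℕ)
    -- PCG sequences
    (xC dC gC : ℕ → Fin n → ℝ)
    (hgC : ∀ k, gC k = A *ᵥ xC k - b)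
    (hxC0 : xC 0 = x0)
    (hdC0 : dC 0 = -(H0 *ᵥ gC 0))
    (hdC : ∀ k, dC (k+1) = -(H0 *ᵥ gC (k+1)) +
      ((gC (k+1) ⬝ᵥ (H0 *ᵥ gC (k+1))) / (gC k ⬝ᵥ (H0 *ᵥ gC k))) • dC k)
    (hxC : ∀ k, xC (k+1) = xC k +
      (-(gC k ⬝ᵥ dC k) / (dC k ⬝ᵥ (A *ᵥ dC k))) • dC k)
    -- PCG iterations 0,…,j are well defined
    (hwf1 : ∀ k, k ≤ j → gC k ⬝ᵥ (H0 *ᵥ gC k) ≠ 0)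
    (hwf2 : ∀ k, k ≤ j → dC k ⬝ᵥ (A *ᵥ dC k) ≠ 0)
    -- Broyden-class method with exact line search
    (φ : ℕ → ℝ)
    (xB dB sB yB gB : ℕ → Fin n → ℝ) (H : ℕ → Matrix (Fin n) (Fin n) ℝ)
    (hgB : ∀ k, gB k = A *ᵥ xB k - b)
    (hxB0 : xB 0 = x0)
    (hH00 : H 0 = H0)
    (hdB : ∀ k, dB k = -(H k *ᵥ gB k))
    (hxB : ∀ k, xB (k+1) = xB k +
      (-(gB k ⬝ᵥ dB k) / (dB k ⬝ᵥ (A *ᵥ dB k))) • dB k)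
    (hsB : ∀ k, sB k = xB (k+1) - xB k)
    (hyB : ∀ k, yB k = A *ᵥ sB k)
    (hH : ∀ k, H (k+1) = H k
      + (1 / (sB k ⬝ᵥ yB k)) • vecMulVec (sB k) (sB k)
      - (1 / (yB k ⬝ᵥ (H k *ᵥ yB k))) • vecMulVec (H k *ᵥ yB k) (H k *ᵥ yB k)
      + (φ k * (yB k ⬝ᵥ (H k *ᵥ yB k))) •
          vecMulVec
            ((1 / (sB k ⬝ᵥ yB k)) • sB k - (1 / (yB k ⬝ᵥ (H k *ᵥ yB k))) • (H k *ᵥ yB k))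
            ((1 / (sB k ⬝ᵥ yB k)) • sB k - (1 / (yB k ⬝ᵥ (H k *ᵥ yB k))) • (H k *ᵥ yB k)))
    -- conditions for k = 0,…,j
    (hphi : ∀ k, k ≤ j → φ k ≠ (yB k ⬝ᵥ sB k) ^ 2 /
      ((yB k ⬝ᵥ sB k) ^ 2 - (yB k ⬝ᵥ (H k *ᵥ yB k)) * (sB k ⬝ᵥ ((H k)⁻¹ *ᵥ sB k))))
    (hcurv : ∀ k, k ≤ j → sB k ⬝ᵥ (A *ᵥ sB k) ≠ 0)
    (hyHy : ∀ k, k ≤ j → yB k ⬝ᵥ (H k *ᵥ yB k) ≠ 0) :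
    ∃ γ : ℕ → ℝ, γ 0 = 1 ∧
      (∀ k, k ≤ j → (∀ i, i ≤ k → gB i ≠ 0) → γ k ≠ 0 ∧ dB k = γ k • dC k) ∧
      (∀ k, k < j → (∀ i, i ≤ k + 1 → gB i ≠ 0) →
        γ (k+1) =
          (γ k * (gB k ⬝ᵥ (H0 *ᵥ gB k)) + φ k * (gB (k+1) ⬝ᵥ (H0 *ᵥ gB (k+1)))) /
          (γ k * (gB k ⬝ᵥ (H0 *ᵥ gB k)) + (gB (k+1) ⬝ᵥ (H0 *ᵥ gB (k+1))))) ∧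
      (∀ k, k ≤ j → (∀ i, i ≤ k → gB i ≠ 0) → sB k = xC (k+1) - xC k) := by
  classical
  have hH0symm : H0.IsSymm := by
    rw [Matrix.IsSymm, ← conjTranspose_eq_transpose_of_trivial]; exact hH0.1
  have hgCs : ∀ k, gC (k+1) = gC k +
      (-(gC k ⬝ᵥ dC k) / (dC k ⬝ᵥ (A *ᵥ dC k))) • (A *ᵥ dC k) := by
    intro k
    have h1 : gC (k+1) - gC k = A *ᵥ (xC (k+1) - xC k) := by
      rw [hgC (k+1), hgC k, mulVec_sub]; abel
    rw [hxC k, add_sub_cancel_left, mulVec_smul] at h1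
    rw [← h1]; abel
  have hH0g : ∀ m, H0 *ᵥ gC (m+1) =
      ((gC (m+1) ⬝ᵥ (H0 *ᵥ gC (m+1))) / (gC m ⬝ᵥ (H0 *ᵥ gC m))) • dC m - dC (m+1) := by
    intro m; rw [hdC m]; abel
  have hH0g0 : H0 *ᵥ gC 0 = -dC 0 := by rw [hdC0, neg_neg]
  -- PCG orthogonality package
  have QC : ∀ k, k ≤ j + 1 → ∀ m, m ≤ k →
      (∀ i, i < m → gC m ⬝ᵥ dC i = 0) ∧
      (∀ i, i < m → gC m ⬝ᵥ (H0 *ᵥ gC i) = 0) ∧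
      (∀ i, i < m → dC i ⬝ᵥ (A *ᵥ dC m) = 0) ∧
      gC m ⬝ᵥ dC m = -(gC m ⬝ᵥ (H0 *ᵥ gC m)) := by
    intro k
    induction k with
    | zero =>
      intro _ m hm
      interval_cases m
      refine ⟨fun i hi => absurd hi (Nat.not_lt_zero i), fun i hi => absurd hi (Nat.not_lt_zero i),
        fun i hi => absurd hi (Nat.not_lt_zero i), ?_⟩
      rw [hdC0, dotProduct_neg]
    | succ k ih =>
      intro hk1 m hm
      have hkj : k ≤ j := by omega
      have ih' := ih (by omega)
      rcases Nat.lt_or_ge m (k+1) with hmk | hmk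
      · exact ih' m (by omega)
      have hm' : m = k + 1 := by omega
      subst hm'
      obtain ⟨Ok, OHk, Ck, Gk⟩ := ih' k le_rfl
      have hρ : gC k ⬝ᵥ (H0 *ᵥ gC k) ≠ 0 := hwf1 k hkj
      have hD : dC k ⬝ᵥ (A *ᵥ dC k) ≠ 0 := hwf2 k hkj
      have hα : -(gC k ⬝ᵥ dC k) / (dC k ⬝ᵥ (A *ᵥ dC k))
          = (gC k ⬝ᵥ (H0 *ᵥ gC k)) / (dC k ⬝ᵥ (A *ᵥ dC k)) := by rw [Gk, neg_neg]
      have O' : ∀ i, i < k + 1 → gC (k+1) ⬝ᵥ dC i = 0 := by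
        intro i hi
        rw [hgCs k, add_dotProduct, smul_dotProduct, smul_eq_mul]
        rcases Nat.lt_or_ge i k with hik | hik
        · rw [Ok i hik, dotProduct_comm (A *ᵥ dC k) (dC i), Ck i hik]; ring
        · rw [show i = k from by omega]
          rw [hα, dotProduct_comm (A *ᵥ dC k) (dC k), Gk]
          field_simp
          ring
      have OH' : ∀ i, i < k + 1 → gC (k+1) ⬝ᵥ (H0 *ᵥ gC i) = 0 := by
        intro i hi
        match i with
        | 0 => rw [hH0g0, dotProduct_neg, O' 0 (by omega), neg_zero]
        | (i'+1) =>
          rw [hH0g i', dotProduct_sub, dotProduct_smul, O' i' (by omega), O' (i'+1) hi,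
            smul_eq_mul, mul_zero, sub_zero]
      have step : ∀ i, (-(gC i ⬝ᵥ dC i) / (dC i ⬝ᵥ (A *ᵥ dC i))) • (A *ᵥ dC i)
          = gC (i+1) - gC i := by
        intro i; rw [hgCs i]; abel
      have αne : ∀ i, i ≤ k → -(gC i ⬝ᵥ dC i) / (dC i ⬝ᵥ (A *ᵥ dC i)) ≠ 0 := by
        intro i hik
        obtain ⟨_, _, _, Gi⟩ := ih' i hik
        rw [Gi, neg_neg]
        exact div_ne_zero (hwf1 i (by omega)) (hwf2 i (by omega))
      have C' : ∀ i, i < k + 1 → dC i ⬝ᵥ (A *ᵥ dC (k+1)) = 0 := by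
        intro i hi
        rw [helper_symdot hA, hdC k, add_dotProduct, neg_dotProduct, smul_dotProduct,
          smul_eq_mul]
        have hXi : ∀ i', i' ≤ k →
            (-(gC i' ⬝ᵥ dC i') / (dC i' ⬝ᵥ (A *ᵥ dC i'))) * ((H0 *ᵥ gC (k+1)) ⬝ᵥ (A *ᵥ dC i'))
            = gC (i'+1) ⬝ᵥ (H0 *ᵥ gC (k+1)) - gC i' ⬝ᵥ (H0 *ᵥ gC (k+1)) := by
          intro i' hik
          have := congrArg (fun u => (H0 *ᵥ gC (k+1)) ⬝ᵥ u) (step i')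
          simpa [dotProduct_smul, dotProduct_sub, smul_eq_mul, dotProduct_comm] using this
        rcases Nat.lt_or_ge i k with hik | hik
        · have h1 := hXi i (by omega)
          rw [helper_symdot hH0symm (gC (i+1)), helper_symdot hH0symm (gC i),
              OH' (i+1) (by omega), OH' i (by omega), sub_zero] at h1
          have hX0 : (H0 *ᵥ gC (k+1)) ⬝ᵥ (A *ᵥ dC i) = 0 := by
            rcases mul_eq_zero.mp h1 with h | h
            · exact absurd h (αne i (by omega))
            · exact h
          rw [hX0, dotProduct_comm (gC (k+1)), helper_symdot hA, Ck i hik]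
          ring
        · rw [show i = k from by omega]
          have h1 := hXi k le_rfl
          rw [helper_symdot hH0symm (gC (k+1)), helper_symdot hH0symm (gC k),
              OH' k (by omega)] at h1
          rw [hα] at h1
          set a := gC (k + 1) ⬝ᵥ (H0 *ᵥ gC (k + 1)) with ha
          set X := (H0 *ᵥ gC (k + 1)) ⬝ᵥ (A *ᵥ dC k) with hX
          rw [sub_zero] at h1
          field_simp at h1 ⊢
          linarith
      exact ⟨O', OH', C', by
        rw [hdC k, dotProduct_add, dotProduct_neg, dotProduct_smul, O' k (by omega),
          smul_eq_mul, mul_zero, add_zero]⟩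
  -- the proportionality coefficients
  set γ : ℕ → ℝ := fun k => Nat.rec (motive := fun _ => ℝ) 1
    (fun k g => (g * (gB k ⬝ᵥ (H0 *ᵥ gB k)) + φ k * (gB (k+1) ⬝ᵥ (H0 *ᵥ gB (k+1)))) /
      (g * (gB k ⬝ᵥ (H0 *ᵥ gB k)) + (gB (k+1) ⬝ᵥ (H0 *ᵥ gB (k+1))))) k with hγdef
  have hγ0 : γ 0 = 1 := rfl
  have hγrec : ∀ m, γ (m+1) =
      (γ m * (gB m ⬝ᵥ (H0 *ᵥ gB m)) + φ m * (gB (m+1) ⬝ᵥ (H0 *ᵥ gB (m+1)))) /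
      (γ m * (gB m ⬝ᵥ (H0 *ᵥ gB m)) + (gB (m+1) ⬝ᵥ (H0 *ᵥ gB (m+1)))) := fun m => rfl
  -- the bridge: if the broyden data agrees at step k, steps coincide
  have bridge : ∀ k, k ≤ j → xB k = xC k → dB k = γ k • dC k → γ k ≠ 0 →
      sB k = (-(gC k ⬝ᵥ dC k) / (dC k ⬝ᵥ (A *ᵥ dC k))) • dC k ∧ xB (k+1) = xC (k+1) := by
    intro k hk hx hd hγk
    have hgBk : gB k = gC k := by rw [hgB, hgC, hx]
    have hsk : sB k = (-(gB k ⬝ᵥ dB k) / (dB k ⬝ᵥ (A *ᵥ dB k))) • dB k := by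
      rw [hsB, hxB k, add_sub_cancel_left]
    have hD := hwf2 k hk
    have h1 : sB k = (-(gC k ⬝ᵥ dC k) / (dC k ⬝ᵥ (A *ᵥ dC k))) • dC k := by
      rw [hsk, hgBk, hd, mulVec_smul, dotProduct_smul, smul_dotProduct, dotProduct_smul]
      match_scalars
      field_simp
      ring
    refine ⟨h1, ?_⟩
    have h2 : xB (k+1) = xB k + sB k := by rw [hxB k, ← hsk]
    rw [h2, h1, hx, ← hxC k]
  -- main induction
  have main : ∀ k, k ≤ j → xB k = xC k ∧ dB k = γ k • dC k ∧ γ k ≠ 0 ∧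
      (H k).IsSymm ∧ (H k).det ≠ 0 ∧
      (∀ w, (∀ i, i ≤ k → dC i ⬝ᵥ w = 0) → H k *ᵥ w = H0 *ᵥ w) := by
    intro k
    induction k with
    | zero =>
      intro _
      have hg0 : gB 0 = gC 0 := by rw [hgB, hgC, hxB0, hxC0]
      refine ⟨by rw [hxB0, hxC0], ?_, one_ne_zero, hH00 ▸ hH0symm,
        hH00 ▸ ne_of_gt hH0.det_pos, fun w _ => by rw [hH00]⟩
      rw [hdB 0, hH00, hg0, ← hdC0, hγ0, one_smul]
    | succ k ih =>
      intro hk1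
      have hkj : k ≤ j := by omega
      obtain ⟨hx, hd, hγk, hsym, hdet, hact⟩ := ih hkj
      obtain ⟨hsk, hxk1⟩ := bridge k hkj hx hd hγk
      have hgBk : gB k = gC k := by rw [hgB, hgC, hx]
      have hgBk1 : gB (k+1) = gC (k+1) := by rw [hgB, hgC, hxk1]
      have hρ : gC k ⬝ᵥ (H0 *ᵥ gC k) ≠ 0 := hwf1 k hkj
      have ha : gC (k+1) ⬝ᵥ (H0 *ᵥ gC (k+1)) ≠ 0 := hwf1 (k+1) hk1
      have hD : dC k ⬝ᵥ (A *ᵥ dC k) ≠ 0 := hwf2 k hkj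
      obtain ⟨O1, O2, O3, G1⟩ := QC (k+1) (by omega) (k+1) le_rfl
      have hGk : gC k ⬝ᵥ dC k = -(gC k ⬝ᵥ (H0 *ᵥ gC k)) := (QC k (by omega) k le_rfl).2.2.2
      have hdg' : dC k ⬝ᵥ gC (k+1) = 0 := by
        rw [dotProduct_comm]; exact O1 k (by omega)
      have hgH0g' : gC k ⬝ᵥ (H0 *ᵥ gC (k+1)) = 0 := by
        rw [helper_symdot hH0symm]; exact O2 k (by omega)
      have hα : (gC k ⬝ᵥ (H0 *ᵥ gC k)) / (dC k ⬝ᵥ (A *ᵥ dC k)) ≠ 0 := div_ne_zero hρ hD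
      have hskα : sB k = ((gC k ⬝ᵥ (H0 *ᵥ gC k)) / (dC k ⬝ᵥ (A *ᵥ dC k))) • dC k := by
        rw [hsk, hGk, neg_neg]
      have hyk : yB k = gC (k+1) - gC k := by
        rw [hyB, hsB, hxk1, hx, mulVec_sub, hgC (k+1), hgC k]; abel
      have hHg' : H k *ᵥ gC (k+1) = H0 *ᵥ gC (k+1) :=
        hact _ (fun i hi => by rw [dotProduct_comm]; exact O1 i (by omega))
      have hHg : H k *ᵥ gC k = -(γ k • dC k) := by
        have h := hdB k
        rw [hgBk, hd] at h
        rw [h, neg_neg]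
      have hHy : H k *ᵥ yB k = H0 *ᵥ gC (k+1) + γ k • dC k := by
        rw [hyk, mulVec_sub, hHg', hHg, sub_neg_eq_add]
      have hsy : sB k ⬝ᵥ yB k =
          (gC k ⬝ᵥ (H0 *ᵥ gC k)) / (dC k ⬝ᵥ (A *ᵥ dC k)) * (gC k ⬝ᵥ (H0 *ᵥ gC k)) := by
        rw [hskα, smul_dotProduct, hyk, dotProduct_sub, hdg', dotProduct_comm (dC k) (gC k),
          hGk, smul_eq_mul]; ring
      have hys : yB k ⬝ᵥ sB k =
          (gC k ⬝ᵥ (H0 *ᵥ gC k)) / (dC k ⬝ᵥ (A *ᵥ dC k)) * (gC k ⬝ᵥ (H0 *ᵥ gC k)) := by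
        rw [dotProduct_comm]; exact hsy
      have hg'H0g' : (H0 *ᵥ gC (k+1)) ⬝ᵥ gC (k+1) = gC (k+1) ⬝ᵥ (H0 *ᵥ gC (k+1)) :=
        dotProduct_comm _ _
      have hg'd : gC (k+1) ⬝ᵥ dC k = 0 := O1 k (by omega)
      have hyHyval : yB k ⬝ᵥ (H k *ᵥ yB k) =
          gC (k+1) ⬝ᵥ (H0 *ᵥ gC (k+1)) + γ k * (gC k ⬝ᵥ (H0 *ᵥ gC k)) := by
        rw [hHy, hyk, sub_dotProduct, dotProduct_add, dotProduct_add, dotProduct_smul,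
          dotProduct_smul, hg'd, hgH0g', hGk, smul_eq_mul, smul_eq_mul]
        ring
      have hYne : gC (k+1) ⬝ᵥ (H0 *ᵥ gC (k+1)) + γ k * (gC k ⬝ᵥ (H0 *ᵥ gC k)) ≠ 0 := by
        rw [← hyHyval]; exact hyHy k hkj
      -- the inverse of H k applied to sB k
      have hsH : sB k = H k *ᵥ
          (-((((gC k ⬝ᵥ (H0 *ᵥ gC k)) / (dC k ⬝ᵥ (A *ᵥ dC k))) / γ k) • gC k)) := by
        rw [mulVec_neg, mulVec_smul, hHg, hskα, smul_neg, neg_neg, smul_smul,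
          div_mul_cancel₀ _ hγk]
      have hinvs : (H k)⁻¹ *ᵥ sB k =
          -((((gC k ⬝ᵥ (H0 *ᵥ gC k)) / (dC k ⬝ᵥ (A *ᵥ dC k))) / γ k) • gC k) := by
        rw [hsH, mulVec_mulVec, nonsing_inv_mul _ (isUnit_iff_ne_zero.mpr hdet), one_mulVec]
      have hsHs : sB k ⬝ᵥ ((H k)⁻¹ *ᵥ sB k) =
          ((gC k ⬝ᵥ (H0 *ᵥ gC k)) / (dC k ⬝ᵥ (A *ᵥ dC k)))^2 * (gC k ⬝ᵥ (H0 *ᵥ gC k)) / γ k := by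
        rw [hinvs, hskα, dotProduct_neg, smul_dotProduct, dotProduct_smul,
          dotProduct_comm (dC k) (gC k), hGk, smul_eq_mul, smul_eq_mul]
        field_simp
      -- the numerator is nonzero thanks to hphi
      have hN : γ k * (gC k ⬝ᵥ (H0 *ᵥ gC k)) + φ k * (gC (k+1) ⬝ᵥ (H0 *ᵥ gC (k+1))) ≠ 0 := by
        intro h0
        apply hphi k hkj
        have hphix : (yB k ⬝ᵥ sB k) ^ 2 /
            ((yB k ⬝ᵥ sB k) ^ 2 - (yB k ⬝ᵥ (H k *ᵥ yB k)) * (sB k ⬝ᵥ ((H k)⁻¹ *ᵥ sB k)))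
            = -(γ k * (gC k ⬝ᵥ (H0 *ᵥ gC k))) / (gC (k+1) ⬝ᵥ (H0 *ᵥ gC (k+1))) := by
          rw [hys, hyHyval, hsHs]
          set R := gC k ⬝ᵥ (H0 *ᵥ gC k) with hRd
          set Dk := dC k ⬝ᵥ (A *ᵥ dC k) with hDd
          set a' := gC (k+1) ⬝ᵥ (H0 *ᵥ gC (k+1)) with had
          have hE : (R / Dk * R) ^ 2 - (a' + γ k * R) * ((R / Dk) ^ 2 * R / γ k)
              = (R / Dk) ^ 2 * R * (-(a' / γ k)) := by field_simp; ring
          rw [hE]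
          field_simp
        rw [hphix]
        field_simp at h0 ⊢
        linarith
      have hden : γ k * (gC k ⬝ᵥ (H0 *ᵥ gC k)) + gC (k+1) ⬝ᵥ (H0 *ᵥ gC (k+1)) ≠ 0 := by
        intro h0; exact hYne (by linarith)
      have hγsucc : γ (k+1) =
          (γ k * (gC k ⬝ᵥ (H0 *ᵥ gC k)) + φ k * (gC (k+1) ⬝ᵥ (H0 *ᵥ gC (k+1)))) /
          (γ k * (gC k ⬝ᵥ (H0 *ᵥ gC k)) + gC (k+1) ⬝ᵥ (H0 *ᵥ gC (k+1))) := by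
        rw [hγrec k, hgBk, hgBk1]
      have hγ1ne : γ (k+1) ≠ 0 := by rw [hγsucc]; exact div_ne_zero hN hden
      -- scalar products with the new gradient
      have hsg' : sB k ⬝ᵥ gC (k+1) = 0 := by
        rw [hskα, smul_dotProduct, hdg', smul_zero]
      have hHyg' : (H k *ᵥ yB k) ⬝ᵥ gC (k+1) = gC (k+1) ⬝ᵥ (H0 *ᵥ gC (k+1)) := by
        rw [hHy, add_dotProduct, smul_dotProduct, hdg', hg'H0g', smul_zero, add_zero]
      -- the new direction is proportional to the PCG one
      have key : dB (k+1) = γ (k+1) • dC (k+1) := by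
        rw [hdB (k+1), hgBk1, hH k, helper_update_mulVec, hsy, hyHyval, hsg', hHyg', hHg']
        rw [sub_dotProduct, smul_dotProduct, smul_dotProduct, hsg', hHyg']
        rw [hskα, hHy, hdC k, hγsucc]
        simp only [smul_eq_mul, mul_zero, zero_mul, mul_one, zero_sub, mul_neg, neg_neg]
        match_scalars
        · field_simp
          ring
        · have hden2 : gC k ⬝ᵥ (H0 *ᵥ gC k) * γ k + gC (k+1) ⬝ᵥ (H0 *ᵥ gC (k+1)) ≠ 0 := by
            rwa [mul_comm]
          rw [add_comm (gC (k + 1) ⬝ᵥ (H0 *ᵥ gC (k + 1)))]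
          field_simp
          ring
      -- the new H is symmetric
      have hsym' : (H (k+1)).IsSymm := by
        show (H (k+1))ᵀ = H (k+1)
        rw [hH k]
        rw [transpose_add, transpose_sub, transpose_add, transpose_smul, transpose_smul,
          transpose_smul, helper_vmv_transpose, helper_vmv_transpose, helper_vmv_transpose,
          hsym.eq]
      -- the new H acts as H0 on vectors orthogonal to all directions so far
      have hact' : ∀ w, (∀ i, i ≤ k + 1 → dC i ⬝ᵥ w = 0) → H (k+1) *ᵥ w = H0 *ᵥ w := by
        intro w hw
        have hdw : dC k ⬝ᵥ w = 0 := hw k (by omega)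
        have hdk1w : dC (k+1) ⬝ᵥ w = 0 := hw (k+1) le_rfl
        have hH0g'w : (H0 *ᵥ gC (k+1)) ⬝ᵥ w = 0 := by
          rw [hH0g k, sub_dotProduct, smul_dotProduct, hdw, hdk1w, smul_zero, sub_zero]
        have hsw : sB k ⬝ᵥ w = 0 := by rw [hskα, smul_dotProduct, hdw, smul_zero]
        have hHyw : (H k *ᵥ yB k) ⬝ᵥ w = 0 := by
          rw [hHy, add_dotProduct, smul_dotProduct, hdw, hH0g'w, smul_zero, add_zero]
        rw [hH k, helper_update_mulVec, hsw, hHyw, sub_dotProduct, smul_dotProduct,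
          smul_dotProduct, hsw, hHyw, hact w (fun i hi => hw i (by omega))]
        simp
      -- the new H is nonsingular
      have hdet' : (H (k+1)).det ≠ 0 := by
        intro hdet0
        obtain ⟨w, hwne, hw0⟩ := (Matrix.exists_mulVec_eq_zero_iff).mpr hdet0
        rw [hH k, helper_update_mulVec] at hw0
        have hinj : ∀ u, H k *ᵥ u = 0 → u = 0 := by
          intro u hu
          have h1 := congrArg (fun z => (H k)⁻¹ *ᵥ z) hu
          simpa [mulVec_mulVec, nonsing_inv_mul _ (isUnit_iff_ne_zero.mpr hdet),
            one_mulVec, mulVec_zero] using h1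
        have hsyne : sB k ⬝ᵥ yB k ≠ 0 := by rw [hsy]; exact mul_ne_zero hα hρ
        have hYne' : yB k ⬝ᵥ (H k *ᵥ yB k) ≠ 0 := hyHy k hkj
        have hF : 1 / (sB k ⬝ᵥ yB k) * (yB k ⬝ᵥ sB k)
            - 1 / (yB k ⬝ᵥ (H k *ᵥ yB k)) * (yB k ⬝ᵥ (H k *ᵥ yB k)) = 0 := by
          rw [dotProduct_comm (yB k) (sB k)]
          field_simp
          ring
        have hds : sB k ⬝ᵥ w = 0 := by
          have e := congrArg (fun u => yB k ⬝ᵥ u) hw0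
          simp only [dotProduct_add, dotProduct_sub, dotProduct_smul, dotProduct_zero,
            smul_eq_mul] at e
          rw [hF, mul_zero, add_zero, helper_symdot hsym (yB k) w,
            dotProduct_comm w (H k *ᵥ yB k), dotProduct_comm (yB k) (sB k)] at e
          have h1 : 1 / (sB k ⬝ᵥ yB k) * (sB k ⬝ᵥ w) * (sB k ⬝ᵥ yB k) = sB k ⬝ᵥ w := by
            field_simp
          have h2 : 1 / (yB k ⬝ᵥ (H k *ᵥ yB k)) * ((H k *ᵥ yB k) ⬝ᵥ w)
              * (yB k ⬝ᵥ (H k *ᵥ yB k)) = (H k *ᵥ yB k) ⬝ᵥ w := by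
            field_simp
          rw [h1, h2] at e
          linarith
        have hdw : dC k ⬝ᵥ w = 0 := by
          have h3 := hds
          rw [hskα, smul_dotProduct, smul_eq_mul] at h3
          rcases mul_eq_zero.mp h3 with h | h
          · exact absurd h hα
          · exact h
        have hvwv : ((1 / (sB k ⬝ᵥ yB k)) • sB k
              - (1 / (yB k ⬝ᵥ (H k *ᵥ yB k))) • (H k *ᵥ yB k)) ⬝ᵥ w
            = -(1 / (gC (k+1) ⬝ᵥ (H0 *ᵥ gC (k+1)) + γ k * (gC k ⬝ᵥ (H0 *ᵥ gC k)))
                * ((H k *ᵥ yB k) ⬝ᵥ w)) := by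
          rw [sub_dotProduct, smul_dotProduct, smul_dotProduct, hds, hyHyval,
            smul_eq_mul, smul_eq_mul, mul_zero, zero_sub]
        have hbig : H k *ᵥ (w
            - ((1 - φ k) * ((H k *ᵥ yB k) ⬝ᵥ w) /
                (gC (k+1) ⬝ᵥ (H0 *ᵥ gC (k+1)) + γ k * (gC k ⬝ᵥ (H0 *ᵥ gC k)))) • yB k
            + (φ k * ((H k *ᵥ yB k) ⬝ᵥ w) / (γ k * (gC k ⬝ᵥ (H0 *ᵥ gC k)))) • gC k) = 0 := by
          have e2 := hw0
          rw [hds, hvwv, hsy, hyHyval, hskα] at e2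
          rw [mulVec_add, mulVec_sub, mulVec_smul, mulVec_smul, hHg, ← e2]
          match_scalars
          all_goals field_simp
          all_goals try ring
        have hwval : w = ((1 - φ k) * ((H k *ᵥ yB k) ⬝ᵥ w) /
              (gC (k+1) ⬝ᵥ (H0 *ᵥ gC (k+1)) + γ k * (gC k ⬝ᵥ (H0 *ᵥ gC k)))) • yB k
            - (φ k * ((H k *ᵥ yB k) ⬝ᵥ w) / (γ k * (gC k ⬝ᵥ (H0 *ᵥ gC k)))) • gC k := by
          rw [← sub_eq_zero]
          calc w - (((1 - φ k) * ((H k *ᵥ yB k) ⬝ᵥ w) /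
              (gC (k+1) ⬝ᵥ (H0 *ᵥ gC (k+1)) + γ k * (gC k ⬝ᵥ (H0 *ᵥ gC k)))) • yB k
            - (φ k * ((H k *ᵥ yB k) ⬝ᵥ w) / (γ k * (gC k ⬝ᵥ (H0 *ᵥ gC k)))) • gC k)
              = w - ((1 - φ k) * ((H k *ᵥ yB k) ⬝ᵥ w) /
                (gC (k+1) ⬝ᵥ (H0 *ᵥ gC (k+1)) + γ k * (gC k ⬝ᵥ (H0 *ᵥ gC k)))) • yB k
                + (φ k * ((H k *ᵥ yB k) ⬝ᵥ w) / (γ k * (gC k ⬝ᵥ (H0 *ᵥ gC k)))) • gC k := by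
                abel
            _ = 0 := hinj _ hbig
        have hdy : dC k ⬝ᵥ yB k = gC k ⬝ᵥ (H0 *ᵥ gC k) := by
          rw [hyk, dotProduct_sub, hdg', dotProduct_comm (dC k) (gC k), hGk]; ring
        have h5a := congrArg (fun u => dC k ⬝ᵥ u) hwval
        simp only [dotProduct_sub, dotProduct_smul, smul_eq_mul] at h5a
        rw [hdy, dotProduct_comm (dC k) (gC k), hGk] at h5a
        have h5 : dC k ⬝ᵥ w = ((H k *ᵥ yB k) ⬝ᵥ w)
            * (γ k * (gC k ⬝ᵥ (H0 *ᵥ gC k)) + φ k * (gC (k+1) ⬝ᵥ (H0 *ᵥ gC (k+1))))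
            / (((gC (k+1) ⬝ᵥ (H0 *ᵥ gC (k+1)) + γ k * (gC k ⬝ᵥ (H0 *ᵥ gC k)))) * γ k) := by
          rw [h5a]
          field_simp
          ring
        rw [hdw] at h5
        have h6 := h5.symm
        rw [div_eq_zero_iff] at h6
        have hT0 : (H k *ᵥ yB k) ⬝ᵥ w = 0 := by
          rcases h6 with h6 | h6
          · rcases mul_eq_zero.mp h6 with h7 | h7
            · exact h7
            · exact absurd h7 hN
          · exact absurd h6 (mul_ne_zero hYne hγk)
        rw [hT0] at hwval
        simp only [mul_zero, zero_mul, zero_div, zero_smul, sub_zero] at hwval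
        exact hwne hwval
      exact ⟨hxk1, key, hγ1ne, hsym', hdet', hact'⟩
  -- assemble the conclusions
  refine ⟨γ, hγ0, ?_, ?_, ?_⟩
  · intro k hk _
    obtain ⟨_, h2, h3, _⟩ := main k hk
    exact ⟨h3, h2⟩
  · intro k hk _
    exact hγrec k
  · intro k hk _
    obtain ⟨hx, hd, hγk, _⟩ := main k hk
    obtain ⟨hsk, _⟩ := bridge k hk hx hd hγk
    rw [hsk, hxC k, add_sub_cancel_left]
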